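/- Let K be a field of characteristic 0, n ≥ 1, 0 ≤ ℓ ≤ n, and w ∈ S_n. Let R = K[P_J : ∅ ≠ J ⊊ {1,…,n}, J ∉ S_w] and let φ_{ℓ,w} : R → K[x_{i,j} : 1 ≤ i, j ≤ n] be the restriction of the monomial map φ_ℓ to R. Then F_{n,ℓ,w} = ker(φ_{ℓ,w}) if and only if F_{n,ℓ,w} is monomial-free. -/

import Mathlib

open MvPolynomial

/-- Index type for the Plücker variables `P_J`: nonempty proper subsets of `{1,…,n}`
(encoded as `Fin n`, where `i : Fin n` stands for the value `i+1`). -/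
abbrev PIdx (n : ℕ) := {J : Finset (Fin n) // J.Nonempty ∧ J ≠ Finset.univ}

/-- The transposition (1 2) acting on (1-based) row indices. -/
def swap12 (r : ℕ) : ℕ := if r = 1 then 2 else if r = 2 then 1 else r

/-- The image of the Plücker variable `P_J` under the monomial map `φ_ℓ` associated to the
block diagonal matching field `B_ℓ`: writing `J = {j_1 < … < j_k}` (as 1-based values),
it is `sgn(σ)·x_{σ(1),j_1}⋯x_{σ(k),j_k}` where `σ = id` if `|J| = 1` or
`|J ∩ {1,…,ℓ}| ≥ 2`, and `σ = (1 2)` otherwise. Variables `x_{i,j}` are indexed by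
pairs of 1-based natural numbers. -/
noncomputable def phiVal (K : Type*) [CommRing K] (n ℓ : ℕ) (J : Finset (Fin n)) :
    MvPolynomial (ℕ × ℕ) K :=
  let l : List ℕ := (J.sort (· ≤ ·)).map (fun j => (j : ℕ) + 1)
  if J.card = 1 ∨ 2 ≤ (J.filter (fun j : Fin n => (j : ℕ) + 1 ≤ ℓ)).card then
    ((List.range l.length).map
      (fun r => (X (r + 1, l.getD r 0) : MvPolynomial (ℕ × ℕ) K))).prod
  else
    - ((List.range l.length).map
      (fun r => (X (swap12 (r + 1), l.getD r 0) : MvPolynomial (ℕ × ℕ) K))).prod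

/-- The monomial map `φ_ℓ : K[P_J] → K[x_{i,j}]`. -/
noncomputable def phiMap (K : Type*) [CommRing K] (n ℓ : ℕ) :
    MvPolynomial (PIdx n) K →ₐ[K] MvPolynomial (ℕ × ℕ) K :=
  aeval (fun J => phiVal K n ℓ J.1)

/-- The matching field ideal `F_{n,ℓ} = ker φ_ℓ`. -/
noncomputable def Fnl (K : Type*) [CommRing K] (n ℓ : ℕ) :
    Ideal (MvPolynomial (PIdx n) K) :=
  RingHom.ker (phiMap K n ℓ)

/-- Componentwise comparison `A ≤ B` of two finsets via their increasing enumerations. -/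
def finsetLE {n : ℕ} (A B : Finset (Fin n)) : Prop :=
  List.Forall₂ (· ≤ ·) (A.sort (· ≤ ·)) (B.sort (· ≤ ·))

/-- The set `{w_1, …, w_k}` of the first `k` values of the one-line notation of `w`. -/
def initSet {n : ℕ} (w : Equiv.Perm (Fin n)) (k : ℕ) : Finset (Fin n) :=
  (Finset.univ.filter (fun i : Fin n => (i : ℕ) < k)).image w

/-- `S_w`: the set of subsets `J` with `J ≰ {w_1,…,w_{|J|}}`. -/
def Sw {n : ℕ} (w : Equiv.Perm (Fin n)) : Set (Finset (Fin n)) :=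
  {J | ¬ finsetLE J (initSet w J.card)}

/-- Index type for the Plücker variables that do not vanish on the Schubert variety `X(w)`. -/
abbrev RIdx (n : ℕ) (w : Equiv.Perm (Fin n)) := {J : PIdx n // J.1 ∉ Sw w}

open Classical in
/-- The projection `π_w` sending `P_J ↦ 0` for `J ∈ S_w` and `P_J ↦ P_J` otherwise. -/
noncomputable def piw (K : Type*) [CommRing K] {n : ℕ} (w : Equiv.Perm (Fin n)) :
    MvPolynomial (PIdx n) K →ₐ[K] MvPolynomial (RIdx n w) K :=
  aeval (fun J => if h : J.1 ∈ Sw w then 0 else X (⟨J, h⟩ : RIdx n w))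

/-- The restricted matching field ideal `F_{n,ℓ,w} = π_w(F_{n,ℓ})`. -/
noncomputable def Fnlw (K : Type*) [CommRing K] (n ℓ : ℕ) (w : Equiv.Perm (Fin n)) :
    Ideal (MvPolynomial (RIdx n w) K) :=
  Ideal.map (piw K w) (Fnl K n ℓ)

/-- An ideal of a polynomial ring is monomial-free if it contains no (nonzero) monomial. -/
def MonomialFree {σ K : Type*} [CommSemiring K] (I : Ideal (MvPolynomial σ K)) : Prop :=
  ∀ m : σ →₀ ℕ, (monomial m (1 : K)) ∉ I

/-- The adjacent transposition `s_{i+1} = (i+1, i+2)` (1-based), i.e. the swap of the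
0-based positions `i` and `i+1` of `Fin n`. -/
def adjT (n i : ℕ) : Equiv.Perm (Fin n) :=
  if h : i + 1 < n then Equiv.swap ⟨i, Nat.lt_of_succ_lt h⟩ ⟨i + 1, h⟩ else 1

/-- `Z_n`: permutations that are products of adjacent transpositions with pairwise
distance at least 2 between the indices. -/
def Zset (n : ℕ) : Set (Equiv.Perm (Fin n)) :=
  {w | ∃ l : List ℕ, (∀ i ∈ l, i + 1 < n) ∧
        l.Pairwise (fun i j => i + 2 ≤ j ∨ j + 2 ≤ i) ∧
        w = (l.map (adjT n)).prod}

/-- `oneLine w i = w_i` : the `i`-th entry (1-based, with 1-based values) of the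
one-line notation of `w`. -/
def oneLine {n : ℕ} (w : Equiv.Perm (Fin n)) (i : ℕ) : ℕ :=
  if h : i - 1 < n then (w ⟨i - 1, h⟩ : ℕ) + 1 else 0

/-- The (1-based) position `t` with `w_t = n`. -/
def posOfTop {n : ℕ} (w : Equiv.Perm (Fin n)) : ℕ :=
  if h : 0 < n then ((w.symm ⟨n - 1, by omega⟩ : ℕ) + 1) else 0

/-- `deleteTop w u` holds iff `u = ul(w)` is obtained from `w` by deleting the entry `n`
from its one-line notation. -/
def deleteTop {n : ℕ} (w : Equiv.Perm (Fin n)) (u : Equiv.Perm (Fin (n - 1))) : Prop :=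
  ∀ i, 1 ≤ i → i ≤ n - 1 →
    oneLine u i = if i < posOfTop w then oneLine w i else oneLine w (i + 1)

/-- The descending property: writing `w_t = n`, one has `w_t > w_{t+1} > … > w_n`. -/
def descendingProp {n : ℕ} (w : Equiv.Perm (Fin n)) : Prop :=
  ∀ i, posOfTop w ≤ i → i < n → oneLine w (i + 1) < oneLine w i

/-- `T_{n,ℓ}`: the set of permutations `w` for which `F_{n,ℓ,w}` is nonzero and
monomial-free. -/
def Tset (K : Type*) [Field K] (n ℓ : ℕ) : Set (Equiv.Perm (Fin n)) :=
  {w | Fnlw K n ℓ w ≠ ⊥ ∧ MonomialFree (Fnlw K n ℓ w)}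

/-- The one-line notation of `w` as a list of 1-based values. -/
def olList {n : ℕ} (w : Equiv.Perm (Fin n)) : List ℕ :=
  (List.finRange n).map (fun i => (w i : ℕ) + 1)

/-- A list of naturals is 312-free if it has no subsequence of type 312. -/
def List312Free (l : List ℕ) : Prop :=
  ¬ ∃ i j k : ℕ, i < j ∧ j < k ∧ k < l.length ∧
      l.getD j 0 < l.getD k 0 ∧ l.getD k 0 < l.getD i 0

/-- The decreasing list `[a, a-1, …, 1]`. -/
def descTo1 (a : ℕ) : List ℕ := (List.range a).reverse.map (· + 1)

/-- The set `P_ℓ ⊆ S_n`. -/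
def Pset (n ℓ : ℕ) : Set (Equiv.Perm (Fin n)) :=
  if ℓ = n then {w | List312Free (olList w)}
  else
    {w | (¬ List312Free (olList w) →
            oneLine w 2 = ℓ ∧ oneLine w 2 < oneLine w 1 ∧
            List312Free ((olList w).erase ℓ)) ∧
         (∀ m, 3 ≤ m → m ≤ n →
            (olList w).filter (fun v => v ≤ m) = (m - 1) :: m :: descTo1 (m - 2) →
            oneLine w 1 < oneLine w 2 ∧ oneLine w 2 ≤ ℓ ∧
            (olList w).filter (fun v => v ≤ oneLine w 2) =
              oneLine w 1 :: oneLine w 2 ::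
                ((descTo1 (oneLine w 2 - 1)).filter (fun v => v ≠ oneLine w 1)))}

/-- The set `A_1`. -/
def A1set (n : ℕ) : Set (Equiv.Perm (Fin n)) :=
  {w | (∃ u : Equiv.Perm (Fin (n - 1)), deleteTop w u ∧ u ∈ Zset (n - 1)) ∧
       oneLine w n = n - 2 ∧
       ({oneLine w (n - 2), oneLine w (n - 1)} : Set ℕ) = {n - 1, n}}

/-- The set `A_2` (with `ul(w) ∈ T_{n-1,ℓ'}`). -/
def A2set (K : Type*) [Field K] (n ℓ' : ℕ) : Set (Equiv.Perm (Fin n)) :=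
  {w | (∃ u : Equiv.Perm (Fin (n - 1)),
          deleteTop w u ∧ u ∈ Tset K (n - 1) ℓ' ∧ descendingProp u) ∧
       (∀ s t, 1 ≤ s → s ≤ n → 1 ≤ t → t ≤ n →
          oneLine w s = n - 1 → oneLine w t = n → s - 1 ≤ t)}

/-- The restriction `φ_{ℓ,w}` of the monomial map `φ_ℓ` to the subring of
nonvanishing Plücker variables. -/
noncomputable def phiRes (K : Type*) [CommRing K] (n ℓ : ℕ) (w : Equiv.Perm (Fin n)) :
    MvPolynomial (RIdx n w) K →ₐ[K] MvPolynomial (ℕ × ℕ) K :=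
  aeval (fun J => phiVal K n ℓ J.1.1)


section Aux

open Finsupp

variable {K : Type*} [Field K]

lemma listX (K : Type*) [CommRing K] (es : List (ℕ × ℕ)) :
    (es.map (fun e => (X e : MvPolynomial (ℕ × ℕ) K))).prod =
      monomial ((es.map (fun e => Finsupp.single e 1)).sum) 1 := by
  induction es with
  | nil => simp [monomial_zero']
  | cons a t ih =>
      simp only [List.map_cons, List.prod_cons, List.sum_cons, ih]
      rw [X, monomial_mul, one_mul]

lemma prod_pm_one {α : Type*} (s : Finset α) (g : α → ℤ)
    (h : ∀ i ∈ s, g i = 1 ∨ g i = -1) :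
    (∏ i ∈ s, g i) = 1 ∨ (∏ i ∈ s, g i) = -1 := by
  classical
  induction s using Finset.induction_on with
  | empty => simp
  | insert _ _ hx ih =>
      rename_i a t
      rw [Finset.prod_insert hx]
      rcases h a (Finset.mem_insert_self a t) with h1 | h1 <;>
        rcases ih (fun i hi => h i (Finset.mem_insert_of_mem hi)) with h2 | h2 <;>
          simp [h1, h2]

lemma prod_monomial_one {α K : Type*} [CommRing K] (s : Finset α)
    (g : α → ((ℕ × ℕ) →₀ ℕ)) :
    (∏ i ∈ s, (monomial (g i) (1 : K))) = monomial (∑ i ∈ s, g i) 1 := by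
  classical
  induction s using Finset.induction_on with
  | empty => simp [monomial_zero']
  | insert _ _ hx ih =>
      rename_i a t
      rw [Finset.prod_insert hx, Finset.sum_insert hx, ih, monomial_mul, one_mul]

lemma phiVal_eq (K : Type*) [CommRing K] (n ℓ : ℕ) (J : Finset (Fin n)) :
    ∃ (s : ℤ) (b : (ℕ × ℕ) →₀ ℕ), (s = 1 ∨ s = -1) ∧
      phiVal K n ℓ J = C (s : K) * monomial b 1 := by
  rw [phiVal]
  by_cases h : J.card = 1 ∨ 2 ≤ (J.filter (fun j : Fin n => (j : ℕ) + 1 ≤ ℓ)).card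
  · rw [if_pos h]
    refine ⟨1, ?_, Or.inl rfl, ?_⟩
    pick_goal 2
    rw [show (fun r => (X (r + 1, ((J.sort (· ≤ ·)).map (fun j => (j : ℕ) + 1)).getD r 0) :
          MvPolynomial (ℕ × ℕ) K)) = (fun e => (X e : MvPolynomial (ℕ × ℕ) K)) ∘
          (fun r => (r + 1, ((J.sort (· ≤ ·)).map (fun j => (j : ℕ) + 1)).getD r 0)) from rfl,
        ← List.map_map, listX, show ((1 : ℤ) : K) = 1 from by norm_num, C_1, one_mul]
  · rw [if_neg h]
    refine ⟨-1, ?_, Or.inr rfl, ?_⟩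
    pick_goal 2
    rw [show (fun r => (X (swap12 (r + 1),
          ((J.sort (· ≤ ·)).map (fun j => (j : ℕ) + 1)).getD r 0) :
          MvPolynomial (ℕ × ℕ) K)) = (fun e => (X e : MvPolynomial (ℕ × ℕ) K)) ∘
          (fun r => (swap12 (r + 1),
            ((J.sort (· ≤ ·)).map (fun j => (j : ℕ) + 1)).getD r 0)) from rfl,
        ← List.map_map, listX, show ((-1 : ℤ) : K) = -1 from by norm_num, map_neg, C_1,
        neg_mul, one_mul]

lemma phiMap_monomial (K : Type*) [CommRing K] (n ℓ : ℕ) (u : PIdx n →₀ ℕ) :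
    ∃ (s : ℤ) (b : (ℕ × ℕ) →₀ ℕ), (s = 1 ∨ s = -1) ∧
      ∀ c : K, phiMap K n ℓ (monomial u c) = monomial b ((s : K) * c) := by
  choose sg bb hsg hval using fun J : PIdx n => phiVal_eq K n ℓ J.1
  refine ⟨∏ J ∈ u.support, sg J ^ u J, ∑ J ∈ u.support, u J • bb J, ?_, ?_⟩
  · refine prod_pm_one _ _ fun i _ => ?_
    rcases hsg i with h | h
    · left; simp [h]
    · rcases Nat.even_or_odd (u i) with he | ho
      · left; rw [h]; exact Even.neg_one_pow he
      · right; rw [h]; exact Odd.neg_one_pow ho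
  · intro c
    rw [phiMap, aeval_monomial, algebraMap_eq, Finsupp.prod]
    have hfac : ∀ J ∈ u.support, (phiVal K n ℓ J.1) ^ u J
        = C (((sg J : K)) ^ u J) * monomial (u J • bb J) 1 := by
      intro J _
      rw [hval J, mul_pow, monomial_pow, one_pow, map_pow]
    rw [Finset.prod_congr rfl hfac, Finset.prod_mul_distrib, ← map_prod, prod_monomial_one]
    have hc : (∏ J ∈ u.support, ((sg J : K)) ^ u J)
        = (((∏ J ∈ u.support, sg J ^ u J : ℤ)) : K) := by push_cast; ring
    rw [hc, C_mul_monomial, C_mul_monomial, mul_one, mul_comm]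

end Aux


section Aux2

variable {K : Type*} [Field K] {n ℓ : ℕ} {w : Equiv.Perm (Fin n)}

lemma phiRes_eq (K : Type*) [CommRing K] (n ℓ : ℕ) (w : Equiv.Perm (Fin n))
    (f : MvPolynomial (RIdx n w) K) :
    phiRes K n ℓ w f = phiMap K n ℓ (rename Subtype.val f) := by
  rw [phiRes, phiMap, aeval_rename]
  rfl

lemma piw_rename_comp (K : Type*) [CommRing K] {n : ℕ} (w : Equiv.Perm (Fin n)) :
    (piw K w).comp (rename (Subtype.val : RIdx n w → PIdx n)) =
      AlgHom.id K (MvPolynomial (RIdx n w) K) := by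
  apply MvPolynomial.algHom_ext
  intro J
  simp only [AlgHom.comp_apply, rename_X, AlgHom.id_apply, piw, aeval_X]
  rw [dif_neg J.2]

lemma piw_rename (K : Type*) [CommRing K] {n : ℕ} (w : Equiv.Perm (Fin n))
    (f : MvPolynomial (RIdx n w) K) :
    piw K w (rename Subtype.val f) = f := by
  have := AlgHom.congr_fun (piw_rename_comp K w) f
  simpa using this

lemma piw_monomial_touch (K : Type*) [CommRing K] {n : ℕ} (w : Equiv.Perm (Fin n))
    (u : PIdx n →₀ ℕ) (c : K) (J0 : PIdx n) (hJ0 : J0 ∈ u.support) (hSw : J0.1 ∈ Sw w) :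
    piw K w (monomial u c) = 0 := by
  classical
  rw [piw, aeval_monomial, Finsupp.prod]
  rw [Finset.prod_eq_zero hJ0, mul_zero]
  rw [dif_pos hSw]
  exact zero_pow (Finsupp.mem_support_iff.mp hJ0)

lemma exists_preimage {n : ℕ} (w : Equiv.Perm (Fin n)) (u : PIdx n →₀ ℕ)
    (hoff : ∀ J ∈ u.support, J.1 ∉ Sw w) :
    ∃ u' : RIdx n w →₀ ℕ, Finsupp.mapDomain (Subtype.val) u' = u := by
  have hinj : Function.Injective (Subtype.val : RIdx n w → PIdx n) := Subtype.val_injective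
  refine ⟨Finsupp.comapDomain Subtype.val u hinj.injOn,
    Finsupp.mapDomain_comapDomain Subtype.val hinj u ?_⟩
  intro x hx
  exact ⟨⟨x, hoff x hx⟩, rfl⟩

end Aux2

theorem stmt15 (K : Type*) [Field K] [CharZero K] (n ℓ : ℕ) (hn : 1 ≤ n) (hℓ : ℓ ≤ n)
    (w : Equiv.Perm (Fin n)) :
    Fnlw K n ℓ w = RingHom.ker (phiRes K n ℓ w) ↔ MonomialFree (Fnlw K n ℓ w) := by
  classical
  constructor
  · intro heq m hm
    rw [heq, RingHom.mem_ker] at hm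
    obtain ⟨s, b, hs, hmon⟩ := phiMap_monomial K n ℓ (Finsupp.mapDomain Subtype.val m)
    rw [phiRes_eq, rename_monomial, hmon 1, monomial_eq_zero, mul_one] at hm
    rcases hs with h | h <;> rw [h] at hm <;> norm_num at hm
  · intro hMF
    apply le_antisymm
    · rw [Fnlw, Ideal.map_le_iff_le_comap]
      intro f hf
      rw [Ideal.mem_comap, RingHom.mem_ker]
      have hphi : phiMap K n ℓ f = 0 := RingHom.mem_ker.mp hf
      set Off : (PIdx n →₀ ℕ) → Prop := fun u => ∀ J ∈ u.support, J.1 ∉ Sw w with hOffdef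
      set f0 := ∑ u ∈ f.support.filter Off, monomial u (coeff u f) with hf0
      set f1 := ∑ u ∈ f.support.filter (fun u => ¬ Off u), monomial u (coeff u f) with hf1
      have hsplit : f = f0 + f1 := by
        conv_lhs => rw [f.as_sum]
        rw [hf0, hf1, Finset.sum_filter_add_sum_filter_not]
      have hpi1 : piw K w f1 = 0 := by
        rw [hf1, map_sum]
        refine Finset.sum_eq_zero fun u hu => ?_
        obtain ⟨-, hu2⟩ := Finset.mem_filter.mp hu
        simp only [hOffdef, not_forall, Classical.not_imp, not_not] at hu2
        obtain ⟨J0, hJ0, hJ0'⟩ := hu2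
        exact piw_monomial_touch K w u _ J0 hJ0 hJ0'
      have hres : phiRes K n ℓ w (piw K w f) = phiMap K n ℓ f0 := by
        rw [hsplit, map_add, hpi1, add_zero, hf0, map_sum, map_sum, map_sum]
        refine Finset.sum_congr rfl fun u hu => ?_
        obtain ⟨-, hu2⟩ := Finset.mem_filter.mp hu
        obtain ⟨u', hu'⟩ := exists_preimage w u hu2
        rw [← hu', ← rename_monomial, piw_rename, phiRes_eq]
      have h01 : phiMap K n ℓ f0 + phiMap K n ℓ f1 = 0 := by
        rw [← map_add, ← hsplit, hphi]
      have hzero : phiMap K n ℓ f0 = 0 := by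
        by_contra hne
        obtain ⟨b, hb⟩ := ne_zero_iff.mp hne
        have hb1 : coeff b (phiMap K n ℓ f1) ≠ 0 := by
          intro h0
          have := congrArg (coeff b) h01
          rw [coeff_add, h0, add_zero, coeff_zero] at this
          exact hb this
        have hex : ∀ (s : Finset (PIdx n →₀ ℕ)), coeff b (phiMap K n ℓ
            (∑ u ∈ s, monomial u (coeff u f))) ≠ 0 →
            ∃ u ∈ s, ∃ sg : ℤ, (sg = 1 ∨ sg = -1) ∧
              ∀ c : K, phiMap K n ℓ (monomial u c) = monomial b ((sg : K) * c) := by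
          intro s hcs
          rw [map_sum, coeff_sum] at hcs
          obtain ⟨u, hu, hcu⟩ := Finset.exists_ne_zero_of_sum_ne_zero hcs
          obtain ⟨sg, b', hsg, hmon⟩ := phiMap_monomial K n ℓ u
          rw [hmon, coeff_monomial] at hcu
          refine ⟨u, hu, sg, hsg, ?_⟩
          by_cases hbb : b' = b
          · rw [← hbb]; exact hmon
          · rw [if_neg hbb] at hcu; exact absurd rfl hcu
        obtain ⟨u, hu, su, hsu, hmu⟩ := hex _ (by rw [← hf0]; exact hb)
        obtain ⟨v, hv, sv, hsv, hmv⟩ := hex _ (by rw [← hf1]; exact hb1)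
        obtain ⟨-, hu2⟩ := Finset.mem_filter.mp hu
        obtain ⟨-, hv2⟩ := Finset.mem_filter.mp hv
        simp only [hOffdef, not_forall, Classical.not_imp, not_not] at hv2
        obtain ⟨J0, hJ0, hJ0'⟩ := hv2
        set g : MvPolynomial (PIdx n) K :=
          monomial u ((sv : K)) - monomial v ((su : K)) with hg
        have hgker : g ∈ Fnl K n ℓ := by
          rw [Fnl, RingHom.mem_ker, hg, map_sub, hmu, hmv, mul_comm, sub_self]
        have hmem : piw K w g ∈ Fnlw K n ℓ w := Ideal.mem_map_of_mem _ hgker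
        obtain ⟨u', hu'⟩ := exists_preimage w u hu2
        have hpig : piw K w g = monomial u' ((sv : K)) := by
          rw [hg, map_sub, piw_monomial_touch K w v _ J0 hJ0 hJ0', sub_zero,
            ← hu', ← rename_monomial, piw_rename]
        have hsvne : ((sv : ℤ) : K) ≠ 0 := by
          rcases hsv with h | h <;> rw [h] <;> norm_num
        refine hMF u' ?_
        have : monomial u' (1 : K) = C ((sv : K))⁻¹ * monomial u' ((sv : K)) := by
          rw [C_mul_monomial, inv_mul_cancel₀ hsvne]
        rw [this, ← hpig]
        exact Ideal.mul_mem_left _ _ hmem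
      exact hres.trans hzero
    · intro f hf
      rw [RingHom.mem_ker] at hf
      have h1 : rename (Subtype.val) f ∈ Fnl K n ℓ := by
        rw [Fnl, RingHom.mem_ker, ← phiRes_eq, hf]
      have h2 := Ideal.mem_map_of_mem (piw K w) h1
      rwa [piw_rename] at h2
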